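/- Let (Ω, 𝓕, τ) be a probability space, E ⊂ ℝⁿ, θ ∈ (0,1], γ > 0 and 0 ≤ s < m. Suppose {f_ω : E → ℝ^m} is a measurable family such that there exists c > 0 with τ({ω : |f_ω(x) − f_ω(y)| ≤ r}) ≤ c·min(1, (r^γ/|x−y|)^{m/γ}) for all x, y ∈ E and r > 0. Then for all 0 < r < 1 and x, y ∈ E, ∫ φ̃^s_{r,θ}(|f_ω(x) − f_ω(y)|) dτ(ω) ≤ c·(s/(m−s) + 1)·φ^{s/γ, m/γ}_{r^γ, θ}(x − y). -/

import Mathlib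

open MeasureTheory

/-- The kernel `φ^{s,m}_{r,θ}` as a function of the distance. -/
noncomputable def phiK (r θ s m d : ℝ) : ℝ :=
  if d < r then 1 else if d < r ^ θ then (r / d) ^ s else r ^ (θ * (m - s) + s) / d ^ m

/-- The modified kernel `φ̃^s_{r,θ}` as a function of the distance. -/
noncomputable def phiT (r θ s d : ℝ) : ℝ :=
  if d < r then 1 else if d ≤ r ^ θ then (r / d) ^ s else 0

open Set

lemma phiT_nonneg {r θ s d : ℝ} (hr : 0 < r) (hs : 0 ≤ s) : 0 ≤ phiT r θ s d := by
  unfold phiT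
  split_ifs with h1 h2
  · norm_num
  · exact Real.rpow_nonneg (div_nonneg hr.le (le_trans hr.le (not_lt.1 h1))) s
  · exact le_rfl

lemma phiT_le_one {r θ s d : ℝ} (hr : 0 < r) (hs : 0 ≤ s) : phiT r θ s d ≤ 1 := by
  unfold phiT
  split_ifs with h1 h2
  · exact le_rfl
  · exact Real.rpow_le_one (div_nonneg hr.le (le_trans hr.le (not_lt.1 h1)))
      ((div_le_one (lt_of_lt_of_le hr (not_lt.1 h1))).2 (not_lt.1 h1)) hs
  · norm_num

lemma phiK_nonneg {R θ S M d : ℝ} (hR : 0 < R) : 0 ≤ phiK R θ S M d := by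
  unfold phiK
  split_ifs with h1 h2
  · norm_num
  · exact Real.rpow_nonneg (div_nonneg hR.le (le_trans hR.le (not_lt.1 h1))) S
  · exact div_nonneg (Real.rpow_nonneg hR.le _) (Real.rpow_nonneg (le_trans hR.le (not_lt.1 h1)) M)

lemma phiK_diag_le {ρ γ m θ d : ℝ} (hρ : 0 < ρ) (hγ : 0 < γ) (hm : 0 < m) (hd : 0 < d) :
    phiK (ρ ^ γ) θ (m / γ) (m / γ) d ≤ ρ ^ m / d ^ (m / γ) := by
  have hργ : (0:ℝ) < ρ ^ γ := Real.rpow_pos_of_pos hρ γ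
  have hmul : (ρ ^ γ) ^ (m / γ) = ρ ^ m := by
    rw [← Real.rpow_mul hρ.le]
    congr 1
    field_simp
  unfold phiK
  split_ifs with h1 h2
  · rw [le_div_iff₀ (Real.rpow_pos_of_pos hd _), one_mul, ← hmul]
    exact Real.rpow_le_rpow hd.le h1.le (by positivity)
  · rw [Real.div_rpow hργ.le hd.le, hmul]
  · rw [show θ * (m / γ - m / γ) + m / γ = m / γ by ring, hmul]

lemma phiK_diag_le_one {R θ M d : ℝ} (hR : 0 < R) (hR1 : R ≤ 1) (hθ1 : θ ≤ 1)
    (hM : 0 ≤ M) : phiK R θ M M d ≤ 1 := by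
  have hRθ : R ≤ R ^ θ := by
    nth_rewrite 1 [← Real.rpow_one R]
    exact Real.rpow_le_rpow_of_exponent_ge hR hR1 hθ1
  unfold phiK
  split_ifs with h1 h2
  · exact le_rfl
  · exact Real.rpow_le_one (div_nonneg hR.le (le_trans hR.le (not_lt.1 h1)))
      ((div_le_one (lt_of_lt_of_le hR (not_lt.1 h1))).2 (not_lt.1 h1)) hM
  · have hd : R ≤ d := le_trans hRθ (not_lt.1 h2)
    rw [show θ * (M - M) + M = M by ring,
      div_le_one (Real.rpow_pos_of_pos (lt_of_lt_of_le hR hd) M)]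
    exact Real.rpow_le_rpow hR.le hd hM

lemma aux_int {p C2 T : ℝ} (hp : 1 < p) (hC2 : 0 ≤ C2) (hT0 : 0 < T) (hT1 : T ≤ 1)
    {h : ℝ → ℝ} (hh0 : ∀ t, 0 ≤ h t)
    (hb1 : ∀ t ∈ Ioc (0:ℝ) T, h t ≤ C2 * T ^ (-p))
    (hb2 : ∀ t ∈ Ioc T 1, h t ≤ C2 * t ^ (-p))
    (hb3 : ∀ t ∈ Ioi (1:ℝ), h t = 0) :
    ∫ t in Ioi (0:ℝ), h t ≤ C2 * T ^ (1 - p) * (1 + 1 / (p - 1)) := by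
  set M : ℝ → ℝ := fun t => if t ≤ T then C2 * T ^ (-p) else if t ≤ 1 then C2 * t ^ (-p) else 0
    with hM
  have hsplit : Ioc (0:ℝ) T ∪ Ioc T 1 ∪ Ioi 1 = Ioi (0:ℝ) := by
    rw [Ioc_union_Ioc_eq_Ioc hT0.le hT1, Ioc_union_Ioi_eq_Ioi zero_le_one]
  have hM1eq : EqOn M (fun _ => C2 * T ^ (-p)) (Ioc 0 T) := fun t ht => if_pos ht.2
  have hM2eq : EqOn M (fun t => C2 * t ^ (-p)) (Ioc T 1) := fun t ht => by
    simp only [hM, if_neg (not_le.2 ht.1), if_pos ht.2]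
  have hM3eq : EqOn M (fun _ => (0:ℝ)) (Ioi 1) := fun t ht => by
    simp only [hM, if_neg (not_le.2 (lt_of_le_of_lt hT1 ht)), if_neg (not_le.2 (show (1:ℝ) < t from ht))]
  have hM1 : IntegrableOn M (Ioc 0 T) :=
    ((integrableOn_const_iff enorm_ne_top).2 (Or.inr measure_Ioc_lt_top)).congr_fun hM1eq.symm measurableSet_Ioc
  have hcont : ContinuousOn (fun t : ℝ => C2 * t ^ (-p)) (Icc T 1) := by
    apply continuousOn_const.mul
    intro t ht
    exact (Real.continuousAt_rpow_const t (-p)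
      (Or.inl (ne_of_gt (lt_of_lt_of_le hT0 ht.1)))).continuousWithinAt
  have hM2 : IntegrableOn M (Ioc T 1) :=
    ((hcont.integrableOn_Icc).mono_set Ioc_subset_Icc_self).congr_fun hM2eq.symm measurableSet_Ioc
  have hM3 : IntegrableOn M (Ioi 1) :=
    (integrableOn_zero).congr_fun hM3eq.symm measurableSet_Ioi
  have hMint : IntegrableOn M (Ioi 0) := by
    rw [← hsplit]; exact (hM1.union hM2).union hM3
  have hd12 : Disjoint (Ioc (0:ℝ) T) (Ioc T 1) := Ioc_disjoint_Ioc_of_le le_rfl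
  have hd3 : Disjoint (Ioc (0:ℝ) T ∪ Ioc T 1) (Ioi 1) := by
    rw [Ioc_union_Ioc_eq_Ioc hT0.le hT1]
    exact disjoint_left.2 fun t ht ht' => absurd ht.2 (not_le.2 ht')
  have step1 : ∫ t in Ioi (0:ℝ), h t ≤ ∫ t in Ioi (0:ℝ), M t := by
    apply integral_mono_of_nonneg (Filter.Eventually.of_forall hh0) hMint
    refine (ae_restrict_iff' measurableSet_Ioi).2 (Filter.Eventually.of_forall fun t ht => ?_)
    by_cases h1 : t ≤ T
    · rw [hM]; simp only [if_pos h1]; exact hb1 t ⟨ht, h1⟩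
    · by_cases h2 : t ≤ 1
      · rw [hM]; simp only [if_neg h1, if_pos h2]; exact hb2 t ⟨not_le.1 h1, h2⟩
      · rw [hM]; simp only [if_neg h1, if_neg h2]
        exact le_of_eq (hb3 t (not_le.1 h2))
  have hI1 : ∫ t in Ioc (0:ℝ) T, M t = C2 * T ^ (-p) * T := by
    rw [setIntegral_congr_fun measurableSet_Ioc hM1eq, setIntegral_const]
    rw [Real.volume_real_Ioc_of_le hT0.le]
    simp [ENNReal.toReal_ofReal hT0.le, smul_eq_mul]
    ring
  have hI2 : ∫ t in Ioc T 1, M t = C2 * ((1 - T ^ (-p + 1)) / (-p + 1)) := by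
    rw [setIntegral_congr_fun measurableSet_Ioc hM2eq,
      ← intervalIntegral.integral_of_le hT1, intervalIntegral.integral_const_mul,
      integral_rpow (Or.inr ⟨by linarith, fun hmem => absurd hmem.1 (by simp [hT0.le]; linarith)⟩)]
    rw [Real.one_rpow]
  have hI3 : ∫ t in Ioi (1:ℝ), M t = 0 := by
    rw [setIntegral_congr_fun measurableSet_Ioi hM3eq, integral_zero]
  have step2 : ∫ t in Ioi (0:ℝ), M t
      = C2 * T ^ (-p) * T + C2 * ((1 - T ^ (-p + 1)) / (-p + 1)) + 0 := by
    rw [← hsplit, setIntegral_union hd3 measurableSet_Ioi (hM1.union hM2) hM3,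
      setIntegral_union hd12 measurableSet_Ioc hM1 hM2, hI1, hI2, hI3]
  have hu : T ^ (-p) * T = T ^ (1 - p) := by
    nth_rewrite 2 [← Real.rpow_one T]
    rw [← Real.rpow_add hT0]; ring_nf
  have hu2 : T ^ (-p + 1) = T ^ (1 - p) := by ring_nf
  have hp1 : (0:ℝ) < p - 1 := by linarith
  set u := T ^ (1 - p) with hudef
  have hup : 0 < u := Real.rpow_pos_of_pos hT0 _
  have hne : p - 1 ≠ 0 := ne_of_gt hp1
  have hne2 : -p + 1 ≠ 0 := by intro hx; apply hne; linarith
  have key : C2 * u * (1 + 1 / (p - 1))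
      - (C2 * T ^ (-p) * T + C2 * ((1 - T ^ (-p + 1)) / (-p + 1)) + 0) = C2 / (p - 1) := by
    rw [mul_assoc C2 (T ^ (-p)) T, hu, hu2]
    field_simp
    ring
  calc ∫ t in Ioi (0:ℝ), h t ≤ ∫ t in Ioi (0:ℝ), M t := step1
    _ = C2 * T ^ (-p) * T + C2 * ((1 - T ^ (-p + 1)) / (-p + 1)) + 0 := step2
    _ ≤ C2 * u * (1 + 1 / (p - 1)) := by
        have := div_nonneg hC2 hp1.le
        linarith [key]

theorem stmt3 {n k : ℕ} {Ω : Type*} [MeasurableSpace Ω]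
    (τ : Measure Ω) [IsProbabilityMeasure τ]
    (E : Set (EuclideanSpace ℝ (Fin n)))
    (F : Ω → EuclideanSpace ℝ (Fin n) → EuclideanSpace ℝ (Fin k))
    (hFmeas : Measurable (Function.uncurry F))
    (hFcont : ∀ ω, Continuous (F ω))
    (θ γ s m c : ℝ)
    (hθ0 : 0 < θ) (hθ1 : θ ≤ 1) (hγ : 0 < γ) (hs0 : 0 ≤ s) (hsm : s < m)
    (hc : 0 < c)
    (hkey : ∀ x ∈ E, ∀ y ∈ E, ∀ r : ℝ, 0 < r →
      τ {ω | ‖F ω x - F ω y‖ ≤ r} ≤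
        ENNReal.ofReal (c * phiK (r ^ γ) θ (m / γ) (m / γ) ‖x - y‖)) :
    ∀ r : ℝ, 0 < r → r < 1 → ∀ x ∈ E, ∀ y ∈ E,
      ∫ ω, phiT r θ s ‖F ω x - F ω y‖ ∂τ ≤
        c * (s / (m - s) + 1) * phiK (r ^ γ) θ (s / γ) (m / γ) ‖x - y‖ := by
  intro r hr0 hr1 x hx y hy
  have hm0 : 0 < m := lt_of_le_of_lt hs0 hsm
  have hms : 0 < m - s := by linarith
  have hK0 : 0 ≤ s / (m - s) := div_nonneg hs0 hms.le
  set D := ‖x - y‖ with hDdef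
  set Z : Ω → ℝ := fun ω => ‖F ω x - F ω y‖ with hZdef
  have hZmeas : Measurable Z := by
    apply Measurable.norm
    exact (hFmeas.comp (measurable_id.prodMk measurable_const)).sub
      (hFmeas.comp (measurable_id.prodMk measurable_const))
  set g : Ω → ℝ := fun ω => phiT r θ s (Z ω) with hgdef
  have hphiTm : Measurable (phiT r θ s) := by
    unfold phiT
    apply Measurable.ite (measurableSet_lt measurable_id measurable_const) measurable_const
    apply Measurable.ite (measurableSet_le measurable_id measurable_const) _ measurable_const
    have hpow : Measurable (fun u : ℝ => u ^ s) := by measurability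
    exact hpow.comp (measurable_const.div measurable_id)
  have hgmeas : Measurable g := hphiTm.comp hZmeas
  have hg0 : ∀ ω, 0 ≤ g ω := fun ω => phiT_nonneg hr0 hs0
  have hg1 : ∀ ω, g ω ≤ 1 := fun ω => phiT_le_one hr0 hs0
  have hgint : Integrable g τ := by
    apply Integrable.mono' (integrable_const (1:ℝ)) hgmeas.aestronglyMeasurable
    refine Filter.Eventually.of_forall fun ω => ?_
    rw [Real.norm_eq_abs, abs_of_nonneg (hg0 ω)]
    exact hg1 ω
  -- c ≥ 1
  have hc1 : (1:ℝ) ≤ c := by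
    have h1 := hkey x hx x hx 1 one_pos
    have hset : {ω | ‖F ω x - F ω x‖ ≤ (1:ℝ)} = univ := by
      ext ω; simp
    have hph : phiK ((1:ℝ) ^ γ) θ (m / γ) (m / γ) ‖x - x‖ = 1 := by
      rw [Real.one_rpow, sub_self, norm_zero]
      unfold phiK
      rw [if_pos one_pos]
    rw [hset, hph, measure_univ, mul_one] at h1
    exact ENNReal.one_le_ofReal.1 h1
  have hrγ : (0:ℝ) < r ^ γ := Real.rpow_pos_of_pos hr0 γ
  have hrθ : r ≤ r ^ θ := by
    nth_rewrite 1 [← Real.rpow_one r]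
    exact Real.rpow_le_rpow_of_exponent_ge hr0 hr1.le hθ1
  have hrθ0 : (0:ℝ) < r ^ θ := Real.rpow_pos_of_pos hr0 θ
  show ∫ ω, g ω ∂τ ≤ c * (s / (m - s) + 1) * phiK (r ^ γ) θ (s / γ) (m / γ) D
  by_cases hA : D < r ^ γ
  · -- trivial case
    have hphi : phiK (r ^ γ) θ (s / γ) (m / γ) D = 1 := by
      unfold phiK; rw [if_pos hA]
    rw [hphi, mul_one]
    calc ∫ ω, g ω ∂τ ≤ ∫ _ω, (1:ℝ) ∂τ := integral_mono hgint (integrable_const 1) hg1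
      _ = 1 := by simp
      _ ≤ c * (s / (m - s) + 1) := by nlinarith
  · have hD0 : 0 < D := lt_of_lt_of_le hrγ (not_lt.1 hA)
    have hDγ : (0:ℝ) < D ^ (m / γ) := Real.rpow_pos_of_pos hD0 _
    -- layer cake
    have hlc : ∫ ω, g ω ∂τ = ∫ t in Ioi (0:ℝ), (τ {ω | t < g ω}).toReal :=
      hgint.integral_eq_integral_meas_lt (Filter.Eventually.of_forall hg0)
    set h : ℝ → ℝ := fun t => (τ {ω | t < g ω}).toReal with hhdef
    have hh0 : ∀ t, 0 ≤ h t := fun t => ENNReal.toReal_nonneg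
    have hb3 : ∀ t ∈ Ioi (1:ℝ), h t = 0 := by
      intro t ht
      have ht1 : (1:ℝ) < t := ht
      have hempty : {ω | t < g ω} = ∅ := by
        apply eq_empty_of_forall_notMem
        intro ω hω
        have h1 : t < g ω := hω
        have h2 : g ω ≤ 1 := hg1 ω
        linarith
      simp only [hhdef, hempty, measure_empty, ENNReal.toReal_zero]
    rcases eq_or_lt_of_le hs0 with hseq | hspos
    · -- case s = 0
      subst hseq
      have hgeq : g = fun ω => if Z ω ≤ r ^ θ then (1:ℝ) else 0 := by
        funext ω
        show phiT r θ 0 (Z ω) = _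
        unfold phiT
        by_cases h1 : Z ω < r
        · rw [if_pos h1, if_pos (le_trans h1.le hrθ)]
        · rw [if_neg h1]
          by_cases h2 : Z ω ≤ r ^ θ
          · rw [if_pos h2, if_pos h2, Real.rpow_zero]
          · rw [if_neg h2, if_neg h2]
      have hZset : MeasurableSet {ω | Z ω ≤ r ^ θ} := measurableSet_le hZmeas measurable_const
      have hint : ∫ ω, g ω ∂τ = (τ {ω | Z ω ≤ r ^ θ}).toReal := by
        rw [hgeq]
        rw [show (fun ω => if Z ω ≤ r ^ θ then (1:ℝ) else 0)
            = ({ω | Z ω ≤ r ^ θ}).indicator (1 : Ω → ℝ) from by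
          funext ω; rw [Set.indicator_apply]; rfl]
        exact integral_indicator_one hZset
      have hRpos : (0:ℝ) < (r ^ θ) ^ γ := Real.rpow_pos_of_pos hrθ0 γ
      have h2 : (τ {ω | Z ω ≤ r ^ θ}).toReal ≤ c * phiK ((r ^ θ) ^ γ) θ (m / γ) (m / γ) D :=
        ENNReal.toReal_le_of_le_ofReal (mul_nonneg hc.le (phiK_nonneg hRpos))
          (hkey x hx y hy (r ^ θ) hrθ0)
      have hR1 : (r ^ θ) ^ γ ≤ 1 :=
        Real.rpow_le_one (Real.rpow_nonneg hr0.le θ)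
          (Real.rpow_le_one hr0.le hr1.le hθ0.le) hγ.le
      have hmain : phiK ((r ^ θ) ^ γ) θ (m / γ) (m / γ) D ≤ phiK (r ^ γ) θ (0 / γ) (m / γ) D := by
        rw [zero_div]
        by_cases hsub : D < (r ^ γ) ^ θ
        · have hone : phiK (r ^ γ) θ 0 (m / γ) D = 1 := by
            unfold phiK; rw [if_neg hA, if_pos hsub, Real.rpow_zero]
          rw [hone]
          exact phiK_diag_le_one hRpos hR1 hθ1 (by positivity)
        · have hval : phiK (r ^ γ) θ 0 (m / γ) D = r ^ (θ * m) / D ^ (m / γ) := by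
            unfold phiK; rw [if_neg hA, if_neg hsub]
            congr 1
            rw [← Real.rpow_mul hr0.le]
            congr 1
            field_simp
            ring
          rw [hval]
          calc phiK ((r ^ θ) ^ γ) θ (m / γ) (m / γ) D ≤ (r ^ θ) ^ m / D ^ (m / γ) :=
                phiK_diag_le hrθ0 hγ hm0 hD0
            _ = r ^ (θ * m) / D ^ (m / γ) := by rw [← Real.rpow_mul hr0.le]
      rw [hint]
      calc (τ {ω | Z ω ≤ r ^ θ}).toReal ≤ c * phiK ((r ^ θ) ^ γ) θ (m / γ) (m / γ) D := h2
        _ ≤ c * phiK (r ^ γ) θ (0 / γ) (m / γ) D := mul_le_mul_of_nonneg_left hmain hc.le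
        _ = c * (0 / (m - 0) + 1) * phiK (r ^ γ) θ (0 / γ) (m / γ) D := by
            norm_num
    · -- case 0 < s
      have hsne : s ≠ 0 := ne_of_gt hspos
      set p := m / s with hpdef
      have hp : 1 < p := (one_lt_div hspos).2 hsm
      set C2 := c * r ^ m / D ^ (m / γ) with hC2def
      have hC2 : 0 ≤ C2 := by positivity
      have hp1ne : p - 1 ≠ 0 := ne_of_gt (by linarith)
      have e5 : 1 + 1 / (p - 1) = s / (m - s) + 1 := by
        have hq : p - 1 = (m - s) / s := by rw [hpdef]; field_simp
        rw [hq, one_div_div]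
        ring
      have hbound2 : ∀ t : ℝ, 0 < t → t ≤ 1 → h t ≤ C2 * t ^ (-p) := by
        intro t ht0 ht1
        set ρ := r * t ^ (-(1 / s)) with hρdef
        have htpow : (0:ℝ) < t ^ (-(1 / s)) := Real.rpow_pos_of_pos ht0 _
        have hρ0 : 0 < ρ := mul_pos hr0 htpow
        have hsubset : {ω | t < g ω} ⊆ {ω | Z ω ≤ ρ} := by
          intro ω hω
          simp only [mem_setOf_eq] at hω ⊢
          have hgν : t < phiT r θ s (Z ω) := hω
          unfold phiT at hgν
          by_cases h1 : Z ω < r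
          · have h2 : (1:ℝ) ≤ t ^ (-(1 / s)) :=
              Real.one_le_rpow_of_pos_of_le_one_of_nonpos ht0 ht1
                (neg_nonpos.2 (by positivity))
            calc Z ω ≤ r := h1.le
              _ ≤ ρ := le_mul_of_one_le_right hr0.le h2
          · rw [if_neg h1] at hgν
            by_cases h2 : Z ω ≤ r ^ θ
            · rw [if_pos h2] at hgν
              have hZ0 : 0 < Z ω := lt_of_lt_of_le hr0 (not_lt.1 h1)
              have hrZ : 0 ≤ r / Z ω := div_nonneg hr0.le hZ0.le
              have h3 : t ^ (1 / s) < r / Z ω := by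
                have h4 := Real.rpow_lt_rpow ht0.le hgν (by positivity : (0:ℝ) < 1 / s)
                have e : ((r / Z ω) ^ s) ^ (1 / s) = r / Z ω := by
                  rw [← Real.rpow_mul hrZ, mul_one_div_cancel hsne, Real.rpow_one]
                rwa [e] at h4
              have htp : (0:ℝ) < t ^ (1 / s) := Real.rpow_pos_of_pos ht0 _
              have h5 : t ^ (1 / s) * Z ω < r := (lt_div_iff₀ hZ0).1 h3
              have h6 : Z ω < r / t ^ (1 / s) := (lt_div_iff₀ htp).2 (by linarith [h5, mul_comm (t ^ (1 / s)) (Z ω)])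
              have e7 : r / t ^ (1 / s) = ρ := by
                rw [hρdef, Real.rpow_neg ht0.le, div_eq_mul_inv]
              linarith [h6, e7.le]
            · rw [if_neg h2] at hgν; linarith
        calc h t ≤ c * phiK (ρ ^ γ) θ (m / γ) (m / γ) D :=
              ENNReal.toReal_le_of_le_ofReal
                (mul_nonneg hc.le (phiK_nonneg (Real.rpow_pos_of_pos hρ0 γ)))
                (le_trans (measure_mono hsubset) (hkey x hx y hy ρ hρ0))
          _ ≤ c * (ρ ^ m / D ^ (m / γ)) :=
              mul_le_mul_of_nonneg_left (phiK_diag_le hρ0 hγ hm0 hD0) hc.le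
          _ = C2 * t ^ (-p) := by
              have e : (t ^ (-(1 / s))) ^ m = t ^ (-p) := by
                rw [← Real.rpow_mul ht0.le]
                congr 1
                rw [hpdef]; ring
              rw [hC2def, hρdef, Real.mul_rpow hr0.le htpow.le, e]
              ring
      by_cases hsub : D < (r ^ γ) ^ θ
      · -- middle regime
        have hphi : phiK (r ^ γ) θ (s / γ) (m / γ) D = (r ^ γ / D) ^ (s / γ) := by
          unfold phiK; rw [if_neg hA, if_pos hsub]
        set T := (r ^ γ / D) ^ (s / γ) with hTdef
        have hdiv : (0:ℝ) < r ^ γ / D := div_pos hrγ hD0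
        have hT0 : 0 < T := Real.rpow_pos_of_pos hdiv _
        have hT1 : T ≤ 1 := Real.rpow_le_one hdiv.le ((div_le_one hD0).2 (not_lt.1 hA)) (by positivity)
        have hCT : C2 * T ^ (-p) = c := by
          rw [hTdef, ← Real.rpow_mul hdiv.le]
          have e : s / γ * (-p) = -(m / γ) := by rw [hpdef]; field_simp
          have e2 : (r ^ γ) ^ (m / γ) = r ^ m := by
            rw [← Real.rpow_mul hr0.le]; congr 1; field_simp
          rw [e, Real.rpow_neg hdiv.le, Real.div_rpow hrγ.le hD0.le, e2, hC2def]
          have hrm : (0:ℝ) < r ^ m := Real.rpow_pos_of_pos hr0 m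
          field_simp
        have hb1 : ∀ t ∈ Ioc (0:ℝ) T, h t ≤ C2 * T ^ (-p) := by
          intro t ht
          rw [hCT]
          calc h t ≤ 1 := by
                rw [hhdef]
                exact ENNReal.toReal_le_of_le_ofReal zero_le_one
                  (by rw [ENNReal.ofReal_one]; exact prob_le_one)
            _ ≤ c := hc1
        have hb2 : ∀ t ∈ Ioc T 1, h t ≤ C2 * t ^ (-p) :=
          fun t ht => hbound2 t (lt_trans hT0 ht.1) ht.2
        have hfin := aux_int hp hC2 hT0 hT1 hh0 hb1 hb2 hb3
        rw [hlc, hphi]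
        refine le_trans hfin ?_
        have e3 : T ^ ((1:ℝ) - p) = T ^ (-p) * T := by
          rw [show (1:ℝ) - p = -p + 1 by ring, Real.rpow_add hT0, Real.rpow_one]
        rw [e3, ← mul_assoc, hCT, e5]
        exact le_of_eq (by ring)
      · -- far regime
        have hphi : phiK (r ^ γ) θ (s / γ) (m / γ) D
            = (r ^ γ) ^ (θ * (m / γ - s / γ) + s / γ) / D ^ (m / γ) := by
          unfold phiK; rw [if_neg hA, if_neg hsub]
        have hphi2 : (r ^ γ) ^ (θ * (m / γ - s / γ) + s / γ) = r ^ (θ * m) * r ^ ((1 - θ) * s) := by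
          have e : γ * (θ * (m / γ - s / γ) + s / γ) = θ * m + (1 - θ) * s := by
            field_simp; ring
          rw [← Real.rpow_mul hr0.le, e, Real.rpow_add hr0]
        set T := r ^ ((1 - θ) * s) with hTdef
        have hT0 : 0 < T := Real.rpow_pos_of_pos hr0 _
        have hT1 : T ≤ 1 :=
          Real.rpow_le_one hr0.le hr1.le (mul_nonneg (by linarith) hs0)
        have hCT : C2 * T ^ (-p) = c * r ^ (θ * m) / D ^ (m / γ) := by
          rw [hTdef, ← Real.rpow_mul hr0.le]
          have e : (1 - θ) * s * (-p) = -((1 - θ) * m) := by rw [hpdef]; field_simp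
          rw [e, hC2def, div_mul_eq_mul_div, mul_assoc, ← Real.rpow_add hr0,
            show m + -((1 - θ) * m) = θ * m by ring]
        have hb1 : ∀ t ∈ Ioc (0:ℝ) T, h t ≤ C2 * T ^ (-p) := by
          intro t ht
          have hsubset : {ω | t < g ω} ⊆ {ω | Z ω ≤ r ^ θ} := by
            intro ω hω
            simp only [mem_setOf_eq] at hω ⊢
            have hgν : t < phiT r θ s (Z ω) := hω
            unfold phiT at hgν
            by_cases h1 : Z ω < r
            · exact le_trans h1.le hrθ
            · rw [if_neg h1] at hgν
              by_cases h2 : Z ω ≤ r ^ θ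
              · exact h2
              · rw [if_neg h2] at hgν; linarith [ht.1]
          have hRpos : (0:ℝ) < (r ^ θ) ^ γ := Real.rpow_pos_of_pos hrθ0 γ
          calc h t ≤ c * phiK ((r ^ θ) ^ γ) θ (m / γ) (m / γ) D :=
                ENNReal.toReal_le_of_le_ofReal (mul_nonneg hc.le (phiK_nonneg hRpos))
                  (le_trans (measure_mono hsubset) (hkey x hx y hy (r ^ θ) hrθ0))
            _ ≤ c * ((r ^ θ) ^ m / D ^ (m / γ)) :=
                mul_le_mul_of_nonneg_left (phiK_diag_le hrθ0 hγ hm0 hD0) hc.le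
            _ = C2 * T ^ (-p) := by
                rw [hCT, ← Real.rpow_mul hr0.le]
                ring
        have hb2 : ∀ t ∈ Ioc T 1, h t ≤ C2 * t ^ (-p) :=
          fun t ht => hbound2 t (lt_trans hT0 ht.1) ht.2
        have hfin := aux_int hp hC2 hT0 hT1 hh0 hb1 hb2 hb3
        rw [hlc, hphi, hphi2]
        refine le_trans hfin ?_
        have e3 : T ^ ((1:ℝ) - p) = T ^ (-p) * T := by
          rw [show (1:ℝ) - p = -p + 1 by ring, Real.rpow_add hT0, Real.rpow_one]
        rw [e3, ← mul_assoc, hCT, e5]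
        exact le_of_eq (by ring)
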